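/- Let G be a loopless multigraph and F : V(G) → finite sets of naturals with |F(v)| < d(v)/2 for all v. If G has no F-avoiding orientation and |E(G)| is minimum among such counterexamples, then for every vertex v of even degree and every neighbor u of v, neither 0 nor d_G(u) belongs to F(u). -/

import Mathlib

attribute [local instance] Classical.propDecidable

/-- A loopless multigraph: edges indexed by `E` with endpoints in `Sym2 V`. -/
structure Multigraph (V E : Type) where
  ends : E → Sym2 V
  loopless : ∀ e, ¬ (ends e).IsDiag

namespace Multigraph

variable {V E : Type}

/-- Degree of a vertex: number of edges incident to it. -/
noncomputable def deg [Fintype E] (G : Multigraph V E) (v : V) : ℕ :=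
  (Finset.univ.filter fun e => v ∈ G.ends e).card

/-- Two vertices are adjacent if some edge joins them. -/
def Adj (G : Multigraph V E) (u v : V) : Prop :=
  u ≠ v ∧ ∃ e, G.ends e = s(u, v)

/-- An orientation assigns a tail and head to each edge, consistent with its endpoints. -/
structure Orientation (G : Multigraph V E) where
  tail : E → V
  head : E → V
  consistent : ∀ e, G.ends e = s(tail e, head e)

/-- Out-degree of a vertex in an orientation. -/
noncomputable def Orientation.outDeg [Fintype E] {G : Multigraph V E} (D : G.Orientation)
    (v : V) : ℕ :=
  (Finset.univ.filter fun e => D.tail e = v).card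

/-- An orientation is `F`-avoiding if no vertex has out-degree in its forbidden list. -/
def Orientation.Avoids [Fintype E] {G : Multigraph V E} (D : G.Orientation)
    (F : V → Finset ℕ) : Prop :=
  ∀ v, D.outDeg v ∉ F v

/-- Number of edges with both endpoints in `S`. -/
noncomputable def eIn [Fintype E] (G : Multigraph V E) (S : Finset V) : ℕ :=
  (Finset.univ.filter fun e => ∀ w ∈ G.ends e, w ∈ S).card

/-- Number of edges with exactly one endpoint in `S`. -/
noncomputable def cut [Fintype E] (G : Multigraph V E) (S : Finset V) : ℕ :=
  (Finset.univ.filter fun e => (∃ w ∈ G.ends e, w ∈ S) ∧ ¬ ∀ w ∈ G.ends e, w ∈ S).card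

/-- Reachability by directed paths in an orientation. -/
def Orientation.Reach {G : Multigraph V E} (D : G.Orientation) : V → V → Prop :=
  Relation.ReflTransGen fun a b => ∃ e, D.tail e = a ∧ D.head e = b

end Multigraph

namespace Multigraph

variable {V E : Type} [Fintype E]

/-- Deleting an edge from a multigraph. -/
noncomputable def delete (G : Multigraph V E) (e : E) : Multigraph V {f : E // f ≠ e} where
  ends f := G.ends f.1
  loopless f := G.loopless f.1

lemma card_filter_subtype (e : E) (p : E → Prop) :
    (Finset.univ.filter fun f : {f : E // f ≠ e} => p f.1).card + (if p e then 1 else 0)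
      = (Finset.univ.filter p).card := by
  have h1 : (Finset.univ.filter fun f : {f : E // f ≠ e} => p f.1).card
      = (Finset.univ.filter fun f : E => f ≠ e ∧ p f).card := by
    apply Finset.card_bij (fun f _ => f.1)
    · intro f hf
      simp only [Finset.mem_filter, Finset.mem_univ, true_and] at hf ⊢
      exact ⟨f.2, hf⟩
    · intro f _ g _ h
      exact Subtype.ext h
    · intro b hb
      simp only [Finset.mem_filter, Finset.mem_univ, true_and] at hb
      exact ⟨⟨b, hb.1⟩, by simp [hb.2], rfl⟩
  have h2 : (Finset.univ.filter fun f : E => f ≠ e ∧ p f)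
      = (Finset.univ.filter p).erase e := by
    ext f
    simp [and_comm]
  by_cases hp : p e
  · rw [h1, h2, if_pos hp, Finset.card_erase_add_one (by simp [hp])]
  · rw [h1, h2, if_neg hp, Finset.erase_eq_of_notMem (by simp [hp]), add_zero]

lemma delete_deg (G : Multigraph V E) (e : E) (w : V) :
    (G.delete e).deg w + (if w ∈ G.ends e then 1 else 0) = G.deg w := by
  have h := card_filter_subtype e (fun f => w ∈ G.ends f)
  unfold deg delete
  dsimp only
  convert h using 2 <;> congr!

/-- Extend an orientation of `G.delete e` to `G`, orienting `e` from `a` to `b`. -/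
noncomputable def extendOrientation (G : Multigraph V E) (e : E) (a b : V)
    (hab : G.ends e = s(a, b)) (D : (G.delete e).Orientation) : G.Orientation where
  tail f := if h : f = e then a else D.tail ⟨f, h⟩
  head f := if h : f = e then b else D.head ⟨f, h⟩
  consistent f := by
    by_cases h : f = e
    · subst h; simp [hab]
    · simpa [h, delete] using D.consistent ⟨f, h⟩

lemma extendOrientation_outDeg (G : Multigraph V E) (e : E) (a b : V)
    (hab : G.ends e = s(a, b)) (D : (G.delete e).Orientation) (w : V) :
    (G.extendOrientation e a b hab D).outDeg w
      = D.outDeg w + (if a = w then 1 else 0) := by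
  have h := card_filter_subtype e (fun f => (G.extendOrientation e a b hab D).tail f = w)
  have h2 : (Finset.univ.filter fun f : {f : E // f ≠ e} =>
        (G.extendOrientation e a b hab D).tail f.1 = w)
      = (Finset.univ.filter fun f : {f : E // f ≠ e} => D.tail f = w) := by
    apply Finset.filter_congr
    intro f _
    simp [extendOrientation, f.2]
  have h3 : (G.extendOrientation e a b hab D).tail e = a := by
    simp [extendOrientation]
  rw [h2, h3] at h
  unfold Orientation.outDeg
  omega

lemma outDeg_le_deg (G : Multigraph V E) (D : G.Orientation) (w : V) :
    D.outDeg w ≤ G.deg w := by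
  apply Finset.card_le_card
  intro f hf
  simp only [Finset.mem_filter, Finset.mem_univ, true_and] at hf ⊢
  rw [D.consistent f, Sym2.mem_iff]
  exact Or.inl hf.symm

end Multigraph

theorem stmt1 {V E : Type} [Fintype E] (G : Multigraph V E) (F : V → Finset ℕ)
    (hF : ∀ v, 2 * (F v).card < G.deg v)
    (hno : ¬ ∃ D : G.Orientation, D.Avoids F)
    (hmin : ∀ (V' E' : Type) [Fintype E'] (G' : Multigraph V' E') (F' : V' → Finset ℕ),
      Fintype.card E' < Fintype.card E → (∀ v, 2 * (F' v).card < G'.deg v) →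
      ∃ D : G'.Orientation, D.Avoids F') :
    ∀ v u : V, Even (G.deg v) → G.Adj u v → 0 ∉ F u ∧ G.deg u ∉ F u := by
  intro v u hev hadj
  obtain ⟨hne, e, he⟩ := hadj
  obtain ⟨k, hk⟩ := hev
  have hcard : Fintype.card {f : E // f ≠ e} < Fintype.card E :=
    Fintype.card_subtype_lt (x := e) (by simp)
  have hu_mem : u ∈ G.ends e := by rw [he, Sym2.mem_iff]; exact Or.inl rfl
  have hv_mem : v ∈ G.ends e := by rw [he, Sym2.mem_iff]; exact Or.inr rfl
  have hmem_iff : ∀ w : V, w ∈ G.ends e ↔ w = u ∨ w = v := by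
    intro w; rw [he, Sym2.mem_iff]
  have hdegu := Multigraph.delete_deg G e u
  have hdegv := Multigraph.delete_deg G e v
  rw [if_pos hu_mem] at hdegu
  rw [if_pos hv_mem] at hdegv
  constructor
  · -- 0 ∉ F u
    intro h0
    set F' : V → Finset ℕ :=
      fun w => if w = u then ((F u).erase 0).image (· - 1) else F w with hF'
    have hdegcond : ∀ w, 2 * (F' w).card < (G.delete e).deg w := by
      intro w
      by_cases hw : w = u
      · subst w
        have hinj : Set.InjOn (· - 1) ((F u).erase 0) := by
          intro x hx y hy hxy
          simp only [Finset.mem_coe, Finset.mem_erase] at hx hy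
          have hxy' : x - 1 = y - 1 := hxy
          omega
        have hc1 : (((F u).erase 0).image (· - 1)).card = ((F u).erase 0).card :=
          Finset.card_image_of_injOn hinj
        have hc2 : ((F u).erase 0).card = (F u).card - 1 := Finset.card_erase_of_mem h0
        have hpos : 1 ≤ (F u).card := Finset.card_pos.mpr ⟨0, h0⟩
        have := hF u
        simp only [hF', if_pos rfl]
        omega
      · have hfw : F' w = F w := by simp [hF', hw]
        rw [hfw]
        by_cases hwv : w = v
        · subst w
          have := hF v
          omega
        · have hnot : w ∉ G.ends e := by rw [hmem_iff]; tauto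
          have hdw := Multigraph.delete_deg G e w
          rw [if_neg hnot, add_zero] at hdw
          rw [hdw]
          exact hF w
    obtain ⟨D', hD'⟩ := hmin V _ (G.delete e) F' hcard hdegcond
    refine hno ⟨G.extendOrientation e u v he D', ?_⟩
    intro w
    have hout := Multigraph.extendOrientation_outDeg G e u v he D' w
    by_cases hw : w = u
    · subst w
      rw [if_pos rfl] at hout
      intro hmem
      apply hD' u
      simp only [hF', if_pos rfl, Finset.mem_image, Finset.mem_erase]
      exact ⟨D'.outDeg u + 1, ⟨by omega, by rwa [← hout]⟩, by omega⟩
    · rw [if_neg (Ne.symm hw), add_zero] at hout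
      rw [hout]
      have := hD' w
      simpa [hF', hw] using this
  · -- deg u ∉ F u
    intro hd
    set F' : V → Finset ℕ := fun w =>
      if w = u then (F u).erase (G.deg u)
      else if w = v then ((F v).erase 0).image (· - 1) else F w with hF'
    have hdegcond : ∀ w, 2 * (F' w).card < (G.delete e).deg w := by
      intro w
      by_cases hw : w = u
      · subst w
        have hc : ((F u).erase (G.deg u)).card = (F u).card - 1 :=
          Finset.card_erase_of_mem hd
        have hpos : 1 ≤ (F u).card := Finset.card_pos.mpr ⟨_, hd⟩
        have := hF u
        simp only [hF', if_pos rfl]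
        omega
      · by_cases hwv : w = v
        · subst w
          have hc1 : (((F v).erase 0).image (· - 1)).card ≤ (F v).card :=
            le_trans (Finset.card_image_le) (Finset.card_erase_le)
          have := hF v
          have hfv : F' v = ((F v).erase 0).image (· - 1) := by
            rw [hF']; dsimp only; rw [if_neg hw, if_pos rfl]
          rw [hfv]
          omega
        · have hfw : F' w = F w := by simp [hF', hw, hwv]
          rw [hfw]
          have hnot : w ∉ G.ends e := by rw [hmem_iff]; tauto
          have hdw := Multigraph.delete_deg G e w
          rw [if_neg hnot, add_zero] at hdw
          rw [hdw]
          exact hF w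
    obtain ⟨D', hD'⟩ := hmin V _ (G.delete e) F' hcard hdegcond
    have hvu : G.ends e = s(v, u) := by rw [he, Sym2.eq_swap]
    refine hno ⟨G.extendOrientation e v u hvu D', ?_⟩
    intro w
    have hout := Multigraph.extendOrientation_outDeg G e v u hvu D' w
    by_cases hw : w = u
    · subst w
      rw [if_neg (Ne.symm hne), add_zero] at hout
      rw [hout]
      intro hmem
      apply hD' u
      have hle : D'.outDeg u ≤ (G.delete e).deg u := Multigraph.outDeg_le_deg _ D' u
      simp only [hF', if_pos rfl, Finset.mem_erase]
      exact ⟨by omega, hmem⟩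
    · by_cases hwv : w = v
      · subst w
        rw [if_pos rfl] at hout
        intro hmem
        apply hD' v
        have hfv : F' v = ((F v).erase 0).image (· - 1) := by
          rw [hF']; dsimp only; rw [if_neg (Ne.symm hne), if_pos rfl]
        rw [hfv]
        simp only [Finset.mem_image, Finset.mem_erase]
        exact ⟨D'.outDeg v + 1, ⟨by omega, by rwa [← hout]⟩, by omega⟩
      · rw [if_neg (Ne.symm hwv), add_zero] at hout
        rw [hout]
        have := hD' w
        simpa [hF', hw, hwv] using this
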